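/- (Main operator approximation theorem) Let X be a Hausdorff locally convex topological vector space, V ⊆ X compact, K ⊂ ℝ^d compact, G : V → C(K, ℝ^m) continuous (C(K, ℝ^m) with sup norm), and σ a continuous Tauber–Wiener function. Then for every ε > 0 there exist N ≥ 1, vectors ω_k ∈ ℝ^d and reals ζ_k, and maps a_k : X → ℝ^m each of whose components is a finite sum of terms c·σ(f(u) − θ) with f ∈ X*, such that sup_{u∈V} sup_{y∈K} ‖G(u)(y) − Σ_{k=1}^N a_k(u) σ(ω_k·y + ζ_k)‖ < ε. -/

import Mathlib

open Matrix

/-- `σ` is a Tauber–Wiener function. -/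
def TauberWiener (σ : ℝ → ℝ) : Prop :=
  ∀ (a b : ℝ) (g : ℝ → ℝ), ContinuousOn g (Set.Icc a b) →
    ∀ ε > 0, ∃ (N : ℕ) (c w θ : Fin N → ℝ),
      ∀ t ∈ Set.Icc a b, |g t - ∑ i, c i * σ (w i * t - θ i)| < ε



section

variable {X : Type*} [AddCommGroup X] [Module ℝ X] [TopologicalSpace X]
    [IsTopologicalAddGroup X] [ContinuousSMul ℝ X] [LocallyConvexSpace ℝ X] [T2Space X]
    {d : ℕ} (V : Set X) (K : Set (Fin d → ℝ)) [CompactSpace K]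

/-- The basic exponential of a linear functional plus a ridge direction, as a continuous map
on `V × K`. -/
noncomputable def expRidge (f : X →L[ℝ] ℝ) (w : Fin d → ℝ) : C(V × K, ℝ) :=
  ⟨fun z => Real.exp (f (z.1 : X) + w ⬝ᵥ (z.2 : Fin d → ℝ)),
    Real.continuous_exp.comp
      ((f.continuous.comp (continuous_subtype_val.comp continuous_fst)).add
        (continuous_finset_sum _ fun i _ =>
          continuous_const.mul ((continuous_apply i).comp
            (continuous_subtype_val.comp continuous_snd))))⟩

lemma expRidge_apply (f : X →L[ℝ] ℝ) (w : Fin d → ℝ) (z : V × K) :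
    expRidge V K f w z = Real.exp (f (z.1 : X) + w ⬝ᵥ (z.2 : Fin d → ℝ)) := rfl

lemma expRidge_mul (f f' : X →L[ℝ] ℝ) (w w' : Fin d → ℝ) :
    expRidge V K f w * expRidge V K f' w' = expRidge V K (f + f') (w + w') := by
  ext z
  simp only [ContinuousMap.mul_apply, expRidge_apply, ContinuousLinearMap.add_apply,
    add_dotProduct, ← Real.exp_add]
  ring_nf

lemma expRidge_one : expRidge V K (0 : X →L[ℝ] ℝ) (0 : Fin d → ℝ) = 1 := by
  ext z
  simp [expRidge_apply]

/-- The set of all such exponentials. -/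
def expRidgeSet : Set C(V × K, ℝ) :=
  {g | ∃ (f : X →L[ℝ] ℝ) (w : Fin d → ℝ), g = expRidge V K f w}

/-- That set is a submonoid of `C(V × K, ℝ)`. -/
noncomputable def expRidgeMonoid : Submonoid C(V × K, ℝ) where
  carrier := expRidgeSet V K
  mul_mem' := by
    rintro a b ⟨f, w, rfl⟩ ⟨f', w', rfl⟩
    exact ⟨f + f', w + w', expRidge_mul V K f f' w w'⟩
  one_mem' := ⟨0, 0, (expRidge_one V K).symm⟩

lemma expRidge_separates (hVK : ∀ z z' : V × K, z ≠ z' →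
    (z.1 : X) ≠ (z'.1 : X) ∨ (z.2 : Fin d → ℝ) ≠ (z'.2 : Fin d → ℝ)) :
    (Algebra.adjoin ℝ (expRidgeSet V K)).SeparatesPoints := by
  intro z z' hzz'
  rcases hVK z z' hzz' with h | h
  · obtain ⟨f, hf⟩ := SeparatingDual.exists_separating_of_ne (R := ℝ) h
    refine ⟨expRidge V K f 0, ⟨expRidge V K f 0, Algebra.subset_adjoin ⟨f, 0, rfl⟩, rfl⟩, ?_⟩
    simp only [expRidge_apply, zero_dotProduct, add_zero]
    exact fun hc => hf (Real.exp_injective hc)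
  · obtain ⟨i, hi⟩ := Function.ne_iff.mp h
    refine ⟨expRidge V K 0 (Pi.single i 1), ⟨expRidge V K 0 (Pi.single i 1),
      Algebra.subset_adjoin ⟨0, Pi.single i 1, rfl⟩, rfl⟩, ?_⟩
    simp only [expRidge_apply, ContinuousLinearMap.zero_apply, zero_add, single_dotProduct,
      one_mul]
    exact fun hc => hi (Real.exp_injective hc)

end

section

variable {X : Type*} [AddCommGroup X] [Module ℝ X] [TopologicalSpace X]
    [IsTopologicalAddGroup X] [ContinuousSMul ℝ X] [LocallyConvexSpace ℝ X] [T2Space X]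
    {d : ℕ}

lemma sw_step (V : Set X) (hV : IsCompact V) (K : Set (Fin d → ℝ)) [CompactSpace K]
    (h : C(V × K, ℝ)) (ε : ℝ) (hε : 0 < ε) :
    ∃ (n : ℕ) (β : Fin n → ℝ) (f : Fin n → X →L[ℝ] ℝ) (w : Fin n → Fin d → ℝ),
      ∀ z : V × K,
        |h z - ∑ j, β j * Real.exp (f j (z.1 : X) + w j ⬝ᵥ (z.2 : Fin d → ℝ))| < ε := by
  haveI : CompactSpace V := isCompact_iff_compactSpace.mp hV
  have hsep : (Algebra.adjoin ℝ (expRidgeSet V K)).SeparatesPoints := by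
    refine expRidge_separates V K fun z z' hzz' => ?_
    by_contra hcon
    push_neg at hcon
    exact hzz' (Prod.ext (Subtype.ext hcon.1) (Subtype.ext hcon.2))
  obtain ⟨g, hg⟩ := ContinuousMap.exists_mem_subalgebra_near_continuous_of_separatesPoints
    (Algebra.adjoin ℝ (expRidgeSet V K)) hsep h h.continuous ε hε
  have hgspan : (g : C(V × K, ℝ)) ∈ Submodule.span ℝ (expRidgeSet V K) := by
    have h1 : (g : C(V × K, ℝ)) ∈
        Subalgebra.toSubmodule (Algebra.adjoin ℝ (expRidgeSet V K)) := g.2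
    rw [Algebra.adjoin_eq_span] at h1
    rwa [show Submonoid.closure (expRidgeSet V K) = expRidgeMonoid V K from
      Submonoid.closure_eq (expRidgeMonoid V K) ▸ rfl] at h1
  obtain ⟨n, β, gs, hgs⟩ := Submodule.mem_span_set'.mp hgspan
  have hex : ∀ j : Fin n, ∃ (f : X →L[ℝ] ℝ) (w : Fin d → ℝ),
      (gs j : C(V × K, ℝ)) = expRidge V K f w := fun j => (gs j).2
  choose ff ww hfw using hex
  refine ⟨n, β, ff, ww, fun z => ?_⟩
  have hval : (g : C(V × K, ℝ)) z
      = ∑ j, β j * Real.exp (ff j (z.1 : X) + ww j ⬝ᵥ (z.2 : Fin d → ℝ)) := by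
    rw [← hgs]
    rw [ContinuousMap.sum_apply]
    refine Finset.sum_congr rfl fun j _ => ?_
    rw [ContinuousMap.smul_apply, hfw j, expRidge_apply, smul_eq_mul]
  have := hg z
  rw [Real.norm_eq_abs] at this
  rw [← hval]
  rw [abs_sub_comm]
  exact this

end


lemma tw_term_approx
    {X : Type*} [AddCommGroup X] [Module ℝ X] [TopologicalSpace X]
    {d : ℕ} (V : Set X) (hV : IsCompact V)
    (K : Set (Fin d → ℝ)) [CompactSpace K]
    (σ : ℝ → ℝ) (hσcont : Continuous σ) (hσ : TauberWiener σ)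
    (β : ℝ) (f : X →L[ℝ] ℝ) (w : Fin d → ℝ)
    (ε : ℝ) (hε : 0 < ε) :
    ∃ (N : ℕ) (ω : Fin N → Fin d → ℝ) (ζ : Fin N → ℝ) (b : Fin N → X → ℝ),
      (∀ k, ∃ (n : ℕ) (g : Fin n → X →L[ℝ] ℝ) (c θ : Fin n → ℝ),
          ∀ u : X, b k u = ∑ i, c i * σ (g i u - θ i)) ∧
      ∀ (u : V) (y : K),
        |β * Real.exp (f (u : X) + w ⬝ᵥ (y : Fin d → ℝ))
          - ∑ k, σ (ω k ⬝ᵥ (y : Fin d → ℝ) + ζ k) * b k (u : X)| < ε := by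
  haveI : CompactSpace V := isCompact_iff_compactSpace.mp hV
  -- bounds on the linear parts
  set Fy : C(K, ℝ) := ⟨fun y => w ⬝ᵥ (y : Fin d → ℝ), by
    exact continuous_finset_sum _ fun i _ =>
      (continuous_const.mul ((continuous_apply i).comp continuous_subtype_val))⟩ with hFy
  set Fu : C(V, ℝ) := ⟨fun u => f (u : X), f.continuous.comp continuous_subtype_val⟩ with hFu
  set Ry := ‖Fy‖ with hRy
  set Ru := ‖Fu‖ with hRu
  have hymem : ∀ y : K, w ⬝ᵥ (y : Fin d → ℝ) ∈ Set.Icc (-Ry) Ry := fun y => by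
    have := Fy.norm_coe_le_norm y
    rw [Real.norm_eq_abs] at this
    exact abs_le.mp this
  have humem : ∀ u : V, f (u : X) ∈ Set.Icc (-Ru) Ru := fun u => by
    have := Fu.norm_coe_le_norm u
    rw [Real.norm_eq_abs] at this
    exact abs_le.mp this
  set B := |β| * Real.exp Ru with hB
  have hB0 : 0 ≤ B := mul_nonneg (abs_nonneg _) (Real.exp_pos _).le
  set δ := ε / 2 / (B + 1) with hδdef
  have hδ : 0 < δ := div_pos (by linarith) (by linarith)
  -- approximate exp on the y-side
  obtain ⟨n₁, c₁, w₁, θ₁, hq⟩ := hσ (-Ry) Ry Real.exp Real.continuous_exp.continuousOn δ hδ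
  set q : K → ℝ := fun y => ∑ i, c₁ i * σ (w₁ i * (w ⬝ᵥ (y : Fin d → ℝ)) - θ₁ i) with hqdef
  have hq' : ∀ y : K, |Real.exp (w ⬝ᵥ (y : Fin d → ℝ)) - q y| < δ := fun y =>
    hq _ (hymem y)
  set E := Real.exp Ry + δ with hE
  have hE0 : 0 < E := by have := Real.exp_pos Ry; linarith
  have hqbound : ∀ y : K, |q y| ≤ E := fun y => by
    have h1 : |q y| ≤ |Real.exp (w ⬝ᵥ (y : Fin d → ℝ))| + |Real.exp (w ⬝ᵥ (y : Fin d → ℝ)) - q y| := by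
      have := abs_sub_abs_le_abs_sub (q y) (Real.exp (w ⬝ᵥ (y : Fin d → ℝ)))
      rw [abs_sub_comm] at this
      linarith
    have h2 : |Real.exp (w ⬝ᵥ (y : Fin d → ℝ))| ≤ Real.exp Ry := by
      rw [abs_of_pos (Real.exp_pos _)]
      exact Real.exp_le_exp.mpr (hymem y).2
    linarith [(hq' y).le]
  set δ' := ε / 2 / E with hδ'def
  have hδ' : 0 < δ' := div_pos (by linarith) hE0
  -- approximate β * exp on the u-side
  obtain ⟨n₂, c₂, w₂, θ₂, hp⟩ := hσ (-Ru) Ru (fun t => β * Real.exp t)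
    ((continuous_const.mul Real.continuous_exp).continuousOn) δ' hδ'
  set p : X → ℝ := fun u => ∑ i, c₂ i * σ (w₂ i * f u - θ₂ i) with hpdef
  have hp' : ∀ u : V, |β * Real.exp (f (u : X)) - p (u : X)| < δ' := fun u => hp _ (humem u)
  refine ⟨n₁, fun k => w₁ k • w, fun k => -θ₁ k, fun k u => c₁ k * p u, ?_, ?_⟩
  · intro k
    refine ⟨n₂, fun i => w₂ i • f, fun i => c₁ k * c₂ i, θ₂, fun u => ?_⟩
    simp only [ContinuousLinearMap.smul_apply, smul_eq_mul, hpdef]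
    rw [Finset.mul_sum]
    exact Finset.sum_congr rfl fun i _ => by ring
  · intro u y
    have hsum : ∑ k, σ ((w₁ k • w) ⬝ᵥ (y : Fin d → ℝ) + -θ₁ k) * (c₁ k * p (u : X))
        = q y * p (u : X) := by
      rw [hqdef, Finset.sum_mul]
      refine Finset.sum_congr rfl fun k _ => ?_
      rw [smul_dotProduct, smul_eq_mul, ← sub_eq_add_neg]
      ring
    rw [hsum]
    have key : β * Real.exp (f (u : X) + w ⬝ᵥ (y : Fin d → ℝ)) - q y * p (u : X)
        = β * Real.exp (f (u : X)) * (Real.exp (w ⬝ᵥ (y : Fin d → ℝ)) - q y)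
          + q y * (β * Real.exp (f (u : X)) - p (u : X)) := by
      rw [Real.exp_add]; ring
    rw [key]
    have hb1 : |β * Real.exp (f (u : X))| ≤ B := by
      rw [abs_mul, abs_of_pos (Real.exp_pos _), hB]
      exact mul_le_mul_of_nonneg_left (Real.exp_le_exp.mpr (humem u).2) (abs_nonneg _)
    have t1 : |β * Real.exp (f (u : X)) * (Real.exp (w ⬝ᵥ (y : Fin d → ℝ)) - q y)| ≤ B * δ := by
      rw [abs_mul]
      exact mul_le_mul hb1 (hq' y).le (abs_nonneg _) hB0
    have t2 : |q y * (β * Real.exp (f (u : X)) - p (u : X))| ≤ E * δ' := by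
      rw [abs_mul]
      exact mul_le_mul (hqbound y) (hp' u).le (abs_nonneg _) hE0.le
    calc |β * Real.exp (f (u : X)) * (Real.exp (w ⬝ᵥ (y : Fin d → ℝ)) - q y)
          + q y * (β * Real.exp (f (u : X)) - p (u : X))|
        ≤ B * δ + E * δ' := (abs_add_le _ _).trans (add_le_add t1 t2)
      _ < ε := by
          have h1 : B * δ < ε / 2 := by
            have : δ * (B + 1) = ε / 2 := div_mul_cancel₀ _ (by linarith)
            nlinarith
          have h2 : E * δ' = ε / 2 := by
            rw [hδ'def]; field_simp
          nlinarith [h1, h2]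


lemma scalar_approx
    {X : Type*} [AddCommGroup X] [Module ℝ X] [TopologicalSpace X]
    [IsTopologicalAddGroup X] [ContinuousSMul ℝ X] [LocallyConvexSpace ℝ X] [T2Space X]
    {d : ℕ} (V : Set X) (hV : IsCompact V)
    (K : Set (Fin d → ℝ)) [CompactSpace K]
    (σ : ℝ → ℝ) (hσcont : Continuous σ) (hσ : TauberWiener σ)
    (h : C(V × K, ℝ)) (ε : ℝ) (hε : 0 < ε) :
    ∃ (N : ℕ) (ω : Fin N → Fin d → ℝ) (ζ : Fin N → ℝ) (b : Fin N → X → ℝ),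
      (∀ k, ∃ (n : ℕ) (g : Fin n → X →L[ℝ] ℝ) (c θ : Fin n → ℝ),
          ∀ u : X, b k u = ∑ i, c i * σ (g i u - θ i)) ∧
      ∀ (u : V) (y : K),
        |h (u, y) - ∑ k, σ (ω k ⬝ᵥ (y : Fin d → ℝ) + ζ k) * b k (u : X)| < ε := by
  obtain ⟨n, β, f, w, hsw⟩ := sw_step V hV K h (ε/2) (by linarith)
  set ε' := ε / 2 / (n + 1) with hε'def
  have hε' : 0 < ε' := by positivity
  have hex : ∀ j : Fin n, ∃ (N : ℕ) (ω : Fin N → Fin d → ℝ) (ζ : Fin N → ℝ) (b : Fin N → X → ℝ),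
      (∀ k, ∃ (n' : ℕ) (g : Fin n' → X →L[ℝ] ℝ) (c θ : Fin n' → ℝ),
          ∀ u : X, b k u = ∑ i, c i * σ (g i u - θ i)) ∧
      ∀ (u : V) (y : K),
        |β j * Real.exp (f j (u : X) + w j ⬝ᵥ (y : Fin d → ℝ))
          - ∑ k, σ (ω k ⬝ᵥ (y : Fin d → ℝ) + ζ k) * b k (u : X)| < ε' :=
    fun j => tw_term_approx V hV K σ hσcont hσ (β j) (f j) (w j) ε' hε'
  choose Nj ωj ζj bj hnet herr using hex
  let e : (Σ j : Fin n, Fin (Nj j)) ≃ Fin (Fintype.card (Σ j : Fin n, Fin (Nj j))) :=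
    Fintype.equivFin _
  refine ⟨Fintype.card (Σ j : Fin n, Fin (Nj j)),
    fun k => ωj (e.symm k).1 (e.symm k).2,
    fun k => ζj (e.symm k).1 (e.symm k).2,
    fun k => bj (e.symm k).1 (e.symm k).2, fun k => hnet _ _, fun u y => ?_⟩
  have hre : ∑ k, σ (ωj (e.symm k).1 (e.symm k).2 ⬝ᵥ (y : Fin d → ℝ)
        + ζj (e.symm k).1 (e.symm k).2) * bj (e.symm k).1 (e.symm k).2 (u : X)
      = ∑ j, ∑ i, σ (ωj j i ⬝ᵥ (y : Fin d → ℝ) + ζj j i) * bj j i (u : X) := by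
    rw [Equiv.sum_comp e.symm (fun i : (Σ j : Fin n, Fin (Nj j)) =>
      σ (ωj i.1 i.2 ⬝ᵥ (y : Fin d → ℝ) + ζj i.1 i.2) * bj i.1 i.2 (u : X))]
    rw [← Finset.univ_sigma_univ, Finset.sum_sigma]
  rw [hre]
  set S := ∑ j, β j * Real.exp (f j (u : X) + w j ⬝ᵥ (y : Fin d → ℝ)) with hS
  set T := ∑ j, ∑ i, σ (ωj j i ⬝ᵥ (y : Fin d → ℝ) + ζj j i) * bj j i (u : X) with hT
  have h1 : |h (u, y) - S| < ε / 2 := hsw (u, y)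
  have h2 : |S - T| ≤ n * ε' := by
    rw [hS, hT, ← Finset.sum_sub_distrib]
    refine (Finset.abs_sum_le_sum_abs _ _).trans ?_
    calc ∑ j, |β j * Real.exp (f j (u : X) + w j ⬝ᵥ (y : Fin d → ℝ))
          - ∑ i, σ (ωj j i ⬝ᵥ (y : Fin d → ℝ) + ζj j i) * bj j i (u : X)|
        ≤ ∑ _j : Fin n, ε' := Finset.sum_le_sum fun j _ => (herr j u y).le
      _ = n * ε' := by
        simp [Finset.sum_const, Finset.card_univ, nsmul_eq_mul]
  have h3 : (n : ℝ) * ε' ≤ ε / 2 := by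
    have hc : ((n : ℝ) + 1) * ε' = ε / 2 := by
      rw [hε'def]; field_simp
    nlinarith [hε'.le]
  calc |h (u, y) - T| ≤ |h (u, y) - S| + |S - T| := abs_sub_le _ _ _
    _ < ε := by linarith

/-- Main operator approximation theorem: a continuous operator from a compact subset of a
Hausdorff locally convex space into `C(K, ℝ^m)` is uniformly approximated by finite
separable expansions whose coefficient maps are single-hidden-layer topological neural
networks built from continuous linear functionals, and whose spatial factors are ridge
functions. -/
theorem topological_deeponet_operator_approximation
    {X : Type*} [AddCommGroup X] [Module ℝ X] [TopologicalSpace X]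
    [IsTopologicalAddGroup X] [ContinuousSMul ℝ X] [LocallyConvexSpace ℝ X] [T2Space X]
    {d m : ℕ} (V : Set X) (hV : IsCompact V)
    (K : Set (Fin d → ℝ)) [CompactSpace K] (hK : IsCompact K)
    (G : V → C(K, Fin m → ℝ)) (hG : Continuous G)
    (σ : ℝ → ℝ) (hσcont : Continuous σ) (hσ : TauberWiener σ)
    (ε : ℝ) (hε : 0 < ε) :
    ∃ (N : ℕ), 1 ≤ N ∧
      ∃ (ω : Fin N → Fin d → ℝ) (ζ : Fin N → ℝ) (a : Fin N → X → Fin m → ℝ),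
        (∀ (k : Fin N) (r : Fin m),
          ∃ (n : ℕ) (f : Fin n → X →L[ℝ] ℝ) (c θ : Fin n → ℝ),
            ∀ u : X, a k u r = ∑ i, c i * σ (f i u - θ i)) ∧
        ∀ (u : V) (y : K),
          ‖G u y - ∑ k, σ (ω k ⬝ᵥ (y : Fin d → ℝ) + ζ k) • a k (u : X)‖ < ε := by
  -- continuity of the components
  have hcont : ∀ r : Fin m, Continuous fun z : V × K => G z.1 z.2 r := fun r =>
    (continuous_apply r).comp
      (continuous_eval.comp ((hG.comp continuous_fst).prodMk continuous_snd))
  have hex : ∀ r : Fin m,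
      ∃ (N : ℕ) (ω : Fin N → Fin d → ℝ) (ζ : Fin N → ℝ) (b : Fin N → X → ℝ),
        (∀ k, ∃ (n : ℕ) (g : Fin n → X →L[ℝ] ℝ) (c θ : Fin n → ℝ),
            ∀ u : X, b k u = ∑ i, c i * σ (g i u - θ i)) ∧
        ∀ (u : V) (y : K),
          |G u y r - ∑ k, σ (ω k ⬝ᵥ (y : Fin d → ℝ) + ζ k) * b k (u : X)| < ε := fun r =>
    scalar_approx V hV K σ hσcont hσ ⟨fun z => G z.1 z.2 r, hcont r⟩ ε hε
  choose Nr ωr ζr br hnet herr using hex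
  -- global index type, including a dummy index to make it nonempty
  let e : Option (Σ r : Fin m, Fin (Nr r)) ≃
      Fin (Fintype.card (Option (Σ r : Fin m, Fin (Nr r)))) := Fintype.equivFin _
  let Ω : Option (Σ r : Fin m, Fin (Nr r)) → Fin d → ℝ := fun k => match k with
    | none => 0
    | some s => ωr s.1 s.2
  let Z : Option (Σ r : Fin m, Fin (Nr r)) → ℝ := fun k => match k with
    | none => 0
    | some s => ζr s.1 s.2
  let A : Option (Σ r : Fin m, Fin (Nr r)) → X → Fin m → ℝ := fun k u r' => match k with
    | none => 0
    | some s => if r' = s.1 then br s.1 s.2 u else 0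
  refine ⟨Fintype.card (Option (Σ r : Fin m, Fin (Nr r))), ?_, fun k => Ω (e.symm k), fun k => Z (e.symm k),
    fun k => A (e.symm k), ?_, ?_⟩
  · have : 0 < Fintype.card (Option (Σ r : Fin m, Fin (Nr r))) := Fintype.card_pos_iff.mpr ⟨none⟩
    omega
  · intro k r'
    rcases hk : e.symm k with _ | s
    · exact ⟨0, fun i => 0, fun i => 0, fun i => 0, fun u => by simp [A, hk]⟩
    · by_cases hr : r' = s.1
      · obtain ⟨n, g, c, θ, hb⟩ := hnet s.1 s.2
        exact ⟨n, g, c, θ, fun u => by simp only [A, hk, if_pos hr]; exact hb u⟩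
      · exact ⟨0, fun i => 0, fun i => 0, fun i => 0, fun u => by simp [A, hk, if_neg hr]⟩
  · intro u y
    rw [pi_norm_lt_iff hε]
    intro r'
    have hcomp : (G u y - ∑ k, σ (Ω (e.symm k) ⬝ᵥ (y : Fin d → ℝ) + Z (e.symm k))
          • A (e.symm k) (u : X)) r'
        = G u y r' - ∑ k, σ (Ω (e.symm k) ⬝ᵥ (y : Fin d → ℝ) + Z (e.symm k))
          * A (e.symm k) (u : X) r' := by
      simp [Finset.sum_apply]
    have hsum : ∑ k, σ (Ω (e.symm k) ⬝ᵥ (y : Fin d → ℝ) + Z (e.symm k))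
          * A (e.symm k) (u : X) r'
        = ∑ i, σ (ωr r' i ⬝ᵥ (y : Fin d → ℝ) + ζr r' i) * br r' i (u : X) := by
      rw [Equiv.sum_comp e.symm (fun k : Option (Σ r : Fin m, Fin (Nr r)) =>
        σ (Ω k ⬝ᵥ (y : Fin d → ℝ) + Z k) * A k (u : X) r')]
      rw [Fintype.sum_option]
      have hnone : σ (Ω none ⬝ᵥ (y : Fin d → ℝ) + Z none) * A none (u : X) r' = 0 := by
        simp [Ω, Z, A]
      rw [hnone, zero_add]
      rw [← Finset.univ_sigma_univ, Finset.sum_sigma]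
      have hinner : ∀ r'' : Fin m,
          ∑ i, σ (Ω (some ⟨r'', i⟩) ⬝ᵥ (y : Fin d → ℝ) + Z (some ⟨r'', i⟩))
            * A (some ⟨r'', i⟩) (u : X) r'
          = if r' = r'' then
              ∑ i, σ (ωr r'' i ⬝ᵥ (y : Fin d → ℝ) + ζr r'' i) * br r'' i (u : X) else 0 := by
        intro r''
        split_ifs with hcase
        · exact Finset.sum_congr rfl fun i _ => by simp [Ω, Z, A, if_pos hcase]
        · refine Finset.sum_eq_zero fun i _ => by simp [Ω, Z, A, if_neg hcase]
      rw [Finset.sum_congr rfl fun r'' _ => hinner r'']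
      rw [Finset.sum_ite_eq]
      simp
    rw [hcomp, hsum, Real.norm_eq_abs]
    exact herr r' u y
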